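/- arXiv:1409.4670 — 3 statements merged into one kernel-verified Lean document; each statement's English description precedes it below -/
import Mathlib

section
/- In the affine Weyl group W_a of type A₂ inside W̃ = P ⋊ W, the W̃-conjugacy class of the element s₀s₁ (the unique W̃-conjugacy class of W_a whose minimal length is 2) equals the set {t^λ s₁s₂, t^λ s₂s₁ : λ ∈ Q}, where Q is the coroot lattice with simple coroots α₁, α₂. -/
namespace A2

/-- Bundled data for the extended affine Weyl group `W̃ = P ⋊ W` of type `A₂` (for `PGL₃`),
presented as `W̃ = W_a ⋊ Ω` with simple reflections `s0, s1, s2`, length-zero element `tau`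
generating `Ω ≅ ℤ/3`, translations `t (m, n) = t^(m α₁ + n α₂)` for coroot-lattice elements,
and the Iwahori–Matsumoto length function `len`. -/
class A2Data (G : Type*) [Group G] where
  s0 : G
  s1 : G
  s2 : G
  tau : G
  t : ℤ × ℤ → G
  len : G → ℕ
  s0_sq : s0 * s0 = 1
  s1_sq : s1 * s1 = 1
  s2_sq : s2 * s2 = 1
  braid01 : (s0 * s1) ^ 3 = 1
  braid12 : (s1 * s2) ^ 3 = 1
  braid02 : (s0 * s2) ^ 3 = 1
  tau_cube : tau ^ 3 = 1
  tau_s0 : tau * s0 * tau⁻¹ = s1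
  tau_s1 : tau * s1 * tau⁻¹ = s2
  tau_s2 : tau * s2 * tau⁻¹ = s0
  t_add : ∀ a b : ℤ × ℤ, t (a + b) = t a * t b
  s1_t : ∀ m n : ℤ, s1 * t (m, n) * s1⁻¹ = t (n - m, n)
  s2_t : ∀ m n : ℤ, s2 * t (m, n) * s2⁻¹ = t (m, m - n)
  tau_t : ∀ m n : ℤ, tau * t (m, n) * tau⁻¹ = t (-n, m - n)
  s0_def : s0 = t (1, 1) * (s1 * s2 * s1)
  decomp : ∀ g : G, ∃ (m n : ℤ) (w : G) (j : Fin 3),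
    w ∈ ({1, s1, s2, s1 * s2, s2 * s1, s1 * s2 * s1} : Set G) ∧
    g = t (m, n) * w * tau ^ (j : ℕ)
  len_t : ∀ m n : ℤ,
    len (t (m, n)) = (2*m - n).natAbs + (2*n - m).natAbs + (m + n).natAbs
  len_t_s1 : ∀ m n : ℤ,
    len (t (m, n) * s1) = (2*m - n - 1).natAbs + (2*n - m).natAbs + (m + n).natAbs
  len_t_s2 : ∀ m n : ℤ,
    len (t (m, n) * s2) = (2*m - n).natAbs + (2*n - m - 1).natAbs + (m + n).natAbs
  len_t_s1s2 : ∀ m n : ℤ,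
    len (t (m, n) * (s1 * s2)) =
      (2*m - n - 1).natAbs + (2*n - m).natAbs + (m + n - 1).natAbs
  len_t_s2s1 : ∀ m n : ℤ,
    len (t (m, n) * (s2 * s1)) =
      (2*m - n).natAbs + (2*n - m - 1).natAbs + (m + n - 1).natAbs
  len_t_s1s2s1 : ∀ m n : ℤ,
    len (t (m, n) * (s1 * s2 * s1)) =
      (2*m - n - 1).natAbs + (2*n - m - 1).natAbs + (m + n - 1).natAbs
  len_mul_tau : ∀ g : G, len (g * tau) = len g
  len_tau_mul : ∀ g : G, len (tau * g) = len g

namespace A2Data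

variable {G : Type*} [Group G] [A2Data G]

/-- The affine Weyl group `W_a`, the subgroup generated by the simple reflections. -/
def Wa (G : Type*) [Group G] [A2Data G] : Subgroup G :=
  Subgroup.closure {s0, s1, s2}

/-- `y` is `W̃`-conjugate to `x`. -/
def ConjTo (x y : G) : Prop := ∃ g : G, g * x * g⁻¹ = y

/-- The `W̃`-conjugacy class of `x`. -/
def conjClass (x : G) : Set G := {y | ConjTo x y}

def IsConjClass (S : Set G) : Prop := ∃ x : G, S = conjClass x

/-- `n` is the minimal length of an element of `S`, attained on `S`. -/
def IsMinLen (S : Set G) (n : ℕ) : Prop :=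
  (∃ x ∈ S, len x = n) ∧ ∀ x ∈ S, n ≤ len x

/-- The set of simple affine reflections. -/
def simples (G : Type*) [Group G] [A2Data G] : Set G := {s0, s1, s2}

/-- The class `𝕆₁ = {t^{kα₁}s₁, t^{kα₂}s₂, t^{k(α₁+α₂)}s₁s₂s₁ : k ∈ ℤ}`. -/
def O1set (G : Type*) [Group G] [A2Data G] : Set G :=
  {x | ∃ k : ℤ, x = t (k, 0) * s1 ∨ x = t (0, k) * s2 ∨ x = t (k, k) * (s1 * s2 * s1)}

/-- The class `𝕆₂ = {t^λ s₁s₂, t^λ s₂s₁ : λ ∈ Q}`. -/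
def O2set (G : Type*) [Group G] [A2Data G] : Set G :=
  {x | ∃ m n : ℤ, x = t (m, n) * (s1 * s2) ∨ x = t (m, n) * (s2 * s1)}

/-- `C_i = {t^{kα₁+iα₂}s₁, t^{-iα₁+kα₂}s₂, t^{kα₁+(k-i)α₂}s₁s₂s₁ : k ∈ ℤ}`. -/
def Ciset (G : Type*) [Group G] [A2Data G] (i : ℤ) : Set G :=
  {x | ∃ k : ℤ, x = t (k, i) * s1 ∨ x = t (-i, k) * s2 ∨ x = t (k, k - i) * (s1 * s2 * s1)}

/-- `C'_i = {t^{kα₁-iα₂}s₁, t^{iα₁+kα₂}s₂, t^{(k-i)α₁+kα₂}s₁s₂s₁ : k ∈ ℤ}`. -/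
def Ci'set (G : Type*) [Group G] [A2Data G] (i : ℤ) : Set G :=
  {x | ∃ k : ℤ, x = t (k, -i) * s1 ∨ x = t (i, k) * s2 ∨ x = t (k - i, k) * (s1 * s2 * s1)}

/-- `𝕆_{id,τ} = {t^{mα₁+nα₂}τ, t^{mα₁+nα₂}s₁s₂τ : m, n ∈ ℤ}`. -/
def OIdtau (G : Type*) [Group G] [A2Data G] : Set G :=
  {x | ∃ m n : ℤ, x = t (m, n) * tau ∨ x = t (m, n) * (s1 * s2) * tau}

/-- `𝕆_{i,τ} = {t^{kα₁+iα₂}s₁s₂s₁τ, t^{(k+i-1)α₁+kα₂}s₂τ, t^{(1-i)α₁+kα₂}s₁τ : k ∈ ℤ}`. -/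
def Oitau (G : Type*) [Group G] [A2Data G] (i : ℤ) : Set G :=
  {x | ∃ k : ℤ, x = t (k, i) * (s1 * s2 * s1) * tau ∨ x = t (k + i - 1, k) * s2 * tau ∨
    x = t (1 - i, k) * s1 * tau}

/-- One non-length-increasing conjugation step by a simple reflection. -/
def StepTo (x y : G) : Prop :=
  ∃ s ∈ simples G, y = s * x * s ∧ len y ≤ len x

def RedTo : G → G → Prop := Relation.ReflTransGen StepTo

/-- The relation `≈` of the He–Nie reduction method. -/
def Approx (x y : G) : Prop := RedTo x y ∧ RedTo y x

/-- `f` satisfies the defining reduction recursion for the class polynomials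
`f_{w̃,𝕆}`, written as polynomials in the variable `X = v - v⁻¹`. -/
def ClassPolySystem (f : G → Set G → Polynomial ℤ) : Prop :=
  (∀ x : G, (∀ y : G, ConjTo x y → len x ≤ len y) →
    ∀ O : Set G, IsConjClass O → (x ∈ O → f x O = 1) ∧ (x ∉ O → f x O = 0)) ∧
  (∀ x x1 s : G, (∃ y : G, ConjTo x y ∧ len y < len x) →
    Approx x x1 → s ∈ simples G → len (s * x1 * s) < len x1 → len x1 = len x →
    ∀ O : Set G, f x O = Polynomial.X * f (s * x1) O + f (s * x1 * s) O)

/-- `y` is `δ`-conjugate to `x`. -/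
def DConjTo (δ : G ≃* G) (x y : G) : Prop := ∃ g : G, g * x * (δ g)⁻¹ = y

def dConjClass (δ : G ≃* G) (x : G) : Set G := {y | DConjTo δ x y}

def IsDConjClass (δ : G ≃* G) (S : Set G) : Prop := ∃ x : G, S = dConjClass δ x

def DStepTo (δ : G ≃* G) (x y : G) : Prop :=
  ∃ s ∈ simples G, y = s * x * (δ s)⁻¹ ∧ len y ≤ len x

def DRedTo (δ : G ≃* G) : G → G → Prop := Relation.ReflTransGen (DStepTo δ)

def DApprox (δ : G ≃* G) (x y : G) : Prop := DRedTo δ x y ∧ DRedTo δ y x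

/-- `f` satisfies the `δ`-twisted reduction recursion for the class polynomials
`f_{w̃,𝕆}`, written as polynomials in `X = v - v⁻¹`. -/
def DClassPolySystem (δ : G ≃* G) (f : G → Set G → Polynomial ℤ) : Prop :=
  (∀ x : G, (∀ y : G, DConjTo δ x y → len x ≤ len y) →
    ∀ O : Set G, IsDConjClass δ O → (x ∈ O → f x O = 1) ∧ (x ∉ O → f x O = 0)) ∧
  (∀ x x1 s : G, (∃ y : G, DConjTo δ x y ∧ len y < len x) →
    DApprox δ x x1 → s ∈ simples G → len (s * x1 * (δ s)⁻¹) < len x1 → len x1 = len x →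
    ∀ O : Set G, f x O = Polynomial.X * f (s * x1) O + f (s * x1 * (δ s)⁻¹) O)

/-- The diagram automorphism `δ` of `W̃` of type `A₂`: it fixes `s0`, swaps `s1` and
`s2`, inverts `tau`, swaps the coroot coordinates, and preserves lengths. -/
def IsDiagramAut (δ : G ≃* G) : Prop :=
  δ s0 = s0 ∧ δ s1 = s2 ∧ δ s2 = s1 ∧ δ tau = tau⁻¹ ∧
  (∀ m n : ℤ, δ (t (m, n)) = t (n, m)) ∧ ∀ g : G, len (δ g) = len g

/-- Elementary strong conjugation. -/
def ElemStrongConj (x y : G) : Prop :=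
  len x = len y ∧ ∃ g : G, y = g * x * g⁻¹ ∧
    (len (g * x) = len g + len x ∨ len (x * g⁻¹) = len g + len x)

/-- Strong conjugation: a chain of elementary strong conjugations. -/
def StrongConj : G → G → Prop := Relation.ReflTransGen ElemStrongConj

end A2Data

open A2Data

/-- The affine Hecke algebra attached to `W̃`, over `A = ℤ[v, v⁻¹]`, with standard
basis `T` and the quadratic and braid-type multiplication relations. -/
class HeckeData (G : Type*) [Group G] [A2Data G] (H : Type*) [Ring H]
    [Algebra (LaurentPolynomial ℤ) H] where
  T : G → H
  T_one : T 1 = 1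
  T_mul : ∀ x y : G, len (x * y) = len x + len y → T x * T y = T (x * y)
  T_quad : ∀ s ∈ simples G,
    (T s - algebraMap (LaurentPolynomial ℤ) H (LaurentPolynomial.T 1)) *
      (T s + algebraMap (LaurentPolynomial ℤ) H (LaurentPolynomial.T (-1))) = 0

/-- The commutator `ℤ[v,v⁻¹]`-submodule `[H̃, H̃]`. -/
noncomputable def commSub (H : Type*) [Ring H] [Algebra (LaurentPolynomial ℤ) H] :
    Submodule (LaurentPolynomial ℤ) H :=
  Submodule.span (LaurentPolynomial ℤ) {z : H | ∃ a b : H, z = a * b - b * a}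

/-- The `δ`-twisted commutator `ℤ[v,v⁻¹]`-submodule `[H̃, H̃]_δ`. -/
noncomputable def dCommSub {H : Type*} [Ring H] [Algebra (LaurentPolynomial ℤ) H]
    (δH : H →ₐ[LaurentPolynomial ℤ] H) : Submodule (LaurentPolynomial ℤ) H :=
  Submodule.span (LaurentPolynomial ℤ) {z : H | ∃ a b : H, z = a * b - b * (δH a)}

end A2

section Aux

open A2 A2Data

variable {G : Type*} [Group G] [A2Data G]

private lemma t_zero : (t (0, 0) : G) = 1 := by
  have h := t_add (G := G) (0, 0) (0, 0)
  simp only [Prod.mk_add_mk, add_zero] at h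
  exact mul_left_cancel (a := (t (0, 0) : G)) (by rw [mul_one]; exact h.symm)

private lemma t_inv (m n : ℤ) : (t (m, n) : G)⁻¹ = t (-m, -n) := by
  apply inv_eq_of_mul_eq_one_right
  rw [← t_add, show ((m, n) : ℤ × ℤ) + (-m, -n) = (0, 0) by simp, t_zero]

private lemma t_mul (a b c d : ℤ) : (t (a, b) : G) * t (c, d) = t (a + c, b + d) := by
  rw [← t_add, Prod.mk_add_mk]

private lemma s1_inv : (s1 : G)⁻¹ = s1 := inv_eq_of_mul_eq_one_right s1_sq

private lemma s2_inv : (s2 : G)⁻¹ = s2 := inv_eq_of_mul_eq_one_right s2_sq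

private lemma braid : (s1 : G) * s2 * s1 = s2 * s1 * s2 := by
  have h0 := braid12 (G := G)
  rw [pow_succ, pow_succ, pow_one] at h0
  have h1 : ((s1 : G) * s2 * s1) * (s2 * s1 * s2) = 1 := by rw [← h0]; group
  have h2 := eq_inv_of_mul_eq_one_left h1
  rw [mul_inv_rev, mul_inv_rev, s1_inv, s2_inv] at h2
  rw [h2]; group

private lemma s1_t' (m n : ℤ) : (s1 : G) * t (m, n) = t (n - m, n) * s1 := by
  have h := s1_t (G := G) m n
  rw [← h]; group

private lemma s2_t' (m n : ℤ) : (s2 : G) * t (m, n) = t (m, m - n) * s2 := by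
  have h := s2_t (G := G) m n
  rw [← h]; group

private lemma tau_t' (m n : ℤ) : (tau : G) * t (m, n) = t (-n, m - n) * tau := by
  have h := tau_t (G := G) m n
  rw [← h]; group

private lemma s0s1 : (s0 : G) * s1 = t (1, 1) * (s1 * s2) := by
  rw [s0_def, show (t (1, 1) : G) * (s1 * s2 * s1) * s1 = t (1, 1) * (s1 * s2 * (s1 * s1))
    by group, s1_sq, mul_one]

private lemma s2s0 : (s2 : G) * s0 = t (1, 0) * (s1 * s2) := by
  rw [s0_def, show (s2 : G) * (t (1, 1) * (s1 * s2 * s1)) = (s2 * t (1, 1)) * (s1 * s2 * s1)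
    by group, s2_t']
  norm_num
  rw [show (t (1, 0) : G) * s2 * (s1 * s2 * s1) = t (1, 0) * ((s2 * s1 * s2) * s1) by group,
    ← braid, show (t (1, 0) : G) * (s1 * s2 * s1 * s1) = t (1, 0) * (s1 * s2 * (s1 * s1))
    by group, s1_sq, mul_one]

private lemma s0s2 : (s0 : G) * s2 = t (1, 1) * (s2 * s1) := by
  rw [s0_def, show (t (1, 1) : G) * (s1 * s2 * s1) * s2 = t (1, 1) * (s1 * (s2 * s1 * s2))
    by group, ← braid, show (t (1, 1) : G) * (s1 * (s1 * s2 * s1)) = t (1, 1) * ((s1 * s1) *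
    (s2 * s1)) by group, s1_sq, one_mul]

private lemma eqS1_12 (m n : ℤ) :
    (s1 : G) * (t (m, n) * (s1 * s2)) * s1⁻¹ = t (n - m, n) * (s2 * s1) := by
  rw [s1_inv, show (s1 : G) * (t (m, n) * (s1 * s2)) * s1 = (s1 * t (m, n)) * (s1 * s2 * s1)
    by group, s1_t', show (t (n - m, n) : G) * s1 * (s1 * s2 * s1) =
    t (n - m, n) * ((s1 * s1) * (s2 * s1)) by group, s1_sq, one_mul]

private lemma eqS1_21 (m n : ℤ) :
    (s1 : G) * (t (m, n) * (s2 * s1)) * s1⁻¹ = t (n - m, n) * (s1 * s2) := by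
  rw [s1_inv, show (s1 : G) * (t (m, n) * (s2 * s1)) * s1 = (s1 * t (m, n)) * (s2 * (s1 * s1))
    by group, s1_t', s1_sq, mul_one]
  group

private lemma eqS2_12 (m n : ℤ) :
    (s2 : G) * (t (m, n) * (s1 * s2)) * s2⁻¹ = t (m, m - n) * (s2 * s1) := by
  rw [s2_inv, show (s2 : G) * (t (m, n) * (s1 * s2)) * s2 = (s2 * t (m, n)) * (s1 * (s2 * s2))
    by group, s2_t', s2_sq, mul_one]
  group

private lemma eqS2_21 (m n : ℤ) :
    (s2 : G) * (t (m, n) * (s2 * s1)) * s2⁻¹ = t (m, m - n) * (s1 * s2) := by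
  rw [s2_inv, show (s2 : G) * (t (m, n) * (s2 * s1)) * s2 = (s2 * t (m, n)) * (s2 * s1 * s2)
    by group, s2_t', ← braid]
  rw [show (t (m, m - n) : G) * s2 * (s1 * s2 * s1) = t (m, m - n) * ((s2 * s1 * s2) * s1)
    by group, ← braid]
  rw [show (t (m, m - n) : G) * (s1 * s2 * s1 * s1) = t (m, m - n) * (s1 * s2 * (s1 * s1))
    by group, s1_sq, mul_one]

private lemma eqTau12 (m n : ℤ) :
    (tau : G) * (t (m, n) * (s1 * s2)) * tau⁻¹ = t (1 - n, m - n) * (s1 * s2) := by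
  calc (tau : G) * (t (m, n) * (s1 * s2)) * tau⁻¹
      = (tau * t (m, n) * tau⁻¹) * ((tau * s1 * tau⁻¹) * (tau * s2 * tau⁻¹)) := by group
    _ = t (-n, m - n) * (s2 * s0) := by rw [tau_t, tau_s1, tau_s2]
    _ = (t (-n, m - n) * t (1, 0)) * (s1 * s2) := by rw [s2s0]; group
    _ = t (1 - n, m - n) * (s1 * s2) := by rw [t_mul]; norm_num [sub_eq_neg_add]

private lemma eqTau21 (m n : ℤ) :
    (tau : G) * (t (m, n) * (s2 * s1)) * tau⁻¹ = t (1 - n, 1 + (m - n)) * (s2 * s1) := by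
  calc (tau : G) * (t (m, n) * (s2 * s1)) * tau⁻¹
      = (tau * t (m, n) * tau⁻¹) * ((tau * s2 * tau⁻¹) * (tau * s1 * tau⁻¹)) := by group
    _ = t (-n, m - n) * (s0 * s2) := by rw [tau_t, tau_s1, tau_s2]
    _ = (t (-n, m - n) * t (1, 1)) * (s2 * s1) := by rw [s0s2]; group
    _ = t (1 - n, 1 + (m - n)) * (s2 * s1) := by
        rw [t_mul]; norm_num [sub_eq_neg_add, add_comm]

private lemma eqT12 (a b m n : ℤ) :
    (t (a, b) : G) * (t (m, n) * (s1 * s2)) * (t (a, b))⁻¹ =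
      t (m + a + b, n + 2 * b - a) * (s1 * s2) := by
  rw [t_inv]
  calc (t (a, b) : G) * (t (m, n) * (s1 * s2)) * t (-a, -b)
      = (t (a, b) * t (m, n)) * (s1 * (s2 * t (-a, -b))) := by group
    _ = (t (a, b) * t (m, n)) * (s1 * (t (-a, -a - -b) * s2)) := by rw [s2_t']
    _ = (t (a, b) * t (m, n)) * ((s1 * t (-a, -a - -b)) * s2) := by group
    _ = (t (a, b) * t (m, n)) * ((t (-a - -b - -a, -a - -b) * s1) * s2) := by rw [s1_t']
    _ = ((t (a, b) * t (m, n)) * t (-a - -b - -a, -a - -b)) * (s1 * s2) := by group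
    _ = t (m + a + b, n + 2 * b - a) * (s1 * s2) := by
        rw [t_mul, t_mul]
        congr 2 <;> ring

private lemma eqT21 (a b m n : ℤ) :
    (t (a, b) : G) * (t (m, n) * (s2 * s1)) * (t (a, b))⁻¹ =
      t (m + 2 * a - b, n + a + b) * (s2 * s1) := by
  rw [t_inv]
  calc (t (a, b) : G) * (t (m, n) * (s2 * s1)) * t (-a, -b)
      = (t (a, b) * t (m, n)) * (s2 * (s1 * t (-a, -b))) := by group
    _ = (t (a, b) * t (m, n)) * (s2 * (t (-b - -a, -b) * s1)) := by rw [s1_t']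
    _ = (t (a, b) * t (m, n)) * ((s2 * t (-b - -a, -b)) * s1) := by group
    _ = (t (a, b) * t (m, n)) * ((t (-b - -a, -b - -a - -b) * s2) * s1) := by rw [s2_t']
    _ = ((t (a, b) * t (m, n)) * t (-b - -a, -b - -a - -b)) * (s2 * s1) := by group
    _ = t (m + 2 * a - b, n + a + b) * (s2 * s1) := by
        rw [t_mul, t_mul]
        congr 2 <;> ring

private lemma conj_trans {x y z : G} (h1 : ConjTo x y) (h2 : ConjTo y z) : ConjTo x z := by
  obtain ⟨g, rfl⟩ := h1
  obtain ⟨g', rfl⟩ := h2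
  exact ⟨g' * g, by group⟩

private lemma transReach (m n m' n' : ℤ) (h : (3 : ℤ) ∣ (m' + n') - (m + n)) :
    ConjTo ((t (m, n) : G) * (s1 * s2)) (t (m', n') * (s1 * s2)) := by
  obtain ⟨b, hb⟩ := h
  refine ⟨t (m' - m - b, b), ?_⟩
  rw [eqT12, show m + (m' - m - b) + b = m' by ring, show n + 2 * b - (m' - m - b) = n'
    by omega]

private lemma tauStep (m n : ℤ) :
    ConjTo ((t (m, n) : G) * (s1 * s2)) (t (1 - n, m - n) * (s1 * s2)) :=
  ⟨tau, eqTau12 m n⟩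

private lemma reach12 (m n : ℤ) : ConjTo ((t (1, 1) : G) * (s1 * s2)) (t (m, n) * (s1 * s2)) := by
  have step0 : ConjTo ((t (1, 1) : G) * (s1 * s2)) (t (0, 0) * (s1 * s2)) := by
    have h := tauStep (G := G) 1 1
    norm_num at h
    exact h
  have step1 : ConjTo ((t (0, 0) : G) * (s1 * s2)) (t (1, 0) * (s1 * s2)) := by
    have h := tauStep (G := G) 0 0
    norm_num at h
    exact h
  rcases (by omega : (3 : ℤ) ∣ (m + n) - 2 ∨ (3 : ℤ) ∣ (m + n) ∨ (3 : ℤ) ∣ (m + n) - 1) with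
    h | h | h
  · exact transReach 1 1 m n (by omega)
  · exact conj_trans step0 (transReach 0 0 m n (by omega))
  · exact conj_trans (conj_trans step0 step1) (transReach 1 0 m n (by omega))

private lemma reach21 (m n : ℤ) : ConjTo ((t (1, 1) : G) * (s1 * s2)) (t (m, n) * (s2 * s1)) := by
  refine conj_trans (reach12 (n - m) n) ⟨s1, ?_⟩
  rw [eqS1_12, show n - (n - m) = m by ring]

/-- The target set as a predicate. -/
private def SP (x : G) : Prop :=
  ∃ m n : ℤ, x = t (m, n) * (s1 * s2) ∨ x = t (m, n) * (s2 * s1)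

private lemma cS1 {x : G} (h : SP x) : SP (s1 * x * s1⁻¹) := by
  obtain ⟨m, n, rfl | rfl⟩ := h
  · exact ⟨n - m, n, Or.inr (eqS1_12 m n)⟩
  · exact ⟨n - m, n, Or.inl (eqS1_21 m n)⟩

private lemma cS2 {x : G} (h : SP x) : SP (s2 * x * s2⁻¹) := by
  obtain ⟨m, n, rfl | rfl⟩ := h
  · exact ⟨m, m - n, Or.inr (eqS2_12 m n)⟩
  · exact ⟨m, m - n, Or.inl (eqS2_21 m n)⟩

private lemma cTau {x : G} (h : SP x) : SP (tau * x * tau⁻¹) := by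
  obtain ⟨m, n, rfl | rfl⟩ := h
  · exact ⟨1 - n, m - n, Or.inl (eqTau12 m n)⟩
  · exact ⟨1 - n, 1 + (m - n), Or.inr (eqTau21 m n)⟩

private lemma cT (a b : ℤ) {x : G} (h : SP x) : SP (t (a, b) * x * (t (a, b))⁻¹) := by
  obtain ⟨m, n, rfl | rfl⟩ := h
  · exact ⟨m + a + b, n + 2 * b - a, Or.inl (eqT12 a b m n)⟩
  · exact ⟨m + 2 * a - b, n + a + b, Or.inr (eqT21 a b m n)⟩

private lemma conj_conj (a b x : G) : (a * b) * x * (a * b)⁻¹ = a * (b * x * b⁻¹) * a⁻¹ := by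
  group

private lemma SP_conj_closed (g : G) {x : G} (h : SP x) : SP (g * x * g⁻¹) := by
  obtain ⟨m, n, w, j, hw, rfl⟩ := decomp g
  rw [show t (m, n) * w * tau ^ (j : ℕ) * x * (t (m, n) * w * tau ^ (j : ℕ))⁻¹ =
    t (m, n) * (w * (tau ^ (j : ℕ) * x * (tau ^ (j : ℕ))⁻¹) * w⁻¹) * (t (m, n))⁻¹ by group]
  have htau : SP (tau ^ (j : ℕ) * x * (tau ^ (j : ℕ))⁻¹) := by
    have hj : (j : ℕ) = 0 ∨ (j : ℕ) = 1 ∨ (j : ℕ) = 2 := by omega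
    rcases hj with hj | hj | hj <;> rw [hj]
    · simpa using h
    · simpa using cTau h
    · rw [pow_two (tau : G), conj_conj]
      exact cTau (cTau h)
  have hww : SP (w * (tau ^ (j : ℕ) * x * (tau ^ (j : ℕ))⁻¹) * w⁻¹) := by
    simp only [Set.mem_insert_iff, Set.mem_singleton_iff] at hw
    rcases hw with rfl | rfl | rfl | rfl | rfl | rfl
    · simpa using htau
    · exact cS1 htau
    · exact cS2 htau
    · rw [conj_conj]; exact cS1 (cS2 htau)
    · rw [conj_conj]; exact cS2 (cS1 htau)
    · rw [conj_conj, conj_conj]; exact cS1 (cS2 (cS1 htau))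
  exact cT m n hww

end Aux

open A2 A2Data in
/-- The `W̃`-conjugacy class of `s₀s₁` equals `{t^λ s₁s₂, t^λ s₂s₁ : λ ∈ Q}`. -/
theorem statement_1 {G : Type*} [Group G] [A2Data G] :
    conjClass ((s0 : G) * s1) =
      {x : G | ∃ m n : ℤ, x = t (m, n) * (s1 * s2) ∨ x = t (m, n) * (s2 * s1)} := by
  ext y
  constructor
  · rintro ⟨g, rfl⟩
    rw [s0s1]
    exact SP_conj_closed g ⟨1, 1, Or.inl rfl⟩
  · rintro ⟨m, n, rfl | rfl⟩
    · show ConjTo _ _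
      rw [s0s1]
      exact reach12 m n
    · show ConjTo _ _
      rw [s0s1]
      exact reach21 m n
end

section
/- For each i ≥ 1, the set C_i = {t^{kα₁+iα₂}s₁, t^{−iα₁+kα₂}s₂, t^{kα₁+(k−i)α₂}s₁s₂s₁ : k ∈ ℤ} is a single W̃-conjugacy class in the affine Weyl group W_a of type A₂, and the minimal length of an element of C_i equals 3i if i is odd and 3i + 1 if i is even. -/
namespace A2.A2Data

variable {G : Type*} [Group G] [A2Data G]

lemma t_zero : (t (0 : ℤ × ℤ) : G) = 1 := by
  have h : (t (0 : ℤ × ℤ) : G) * 1 = t (0 : ℤ × ℤ) * t (0 : ℤ × ℤ) := by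
    rw [mul_one, ← t_add]; norm_num
  exact (mul_left_cancel h).symm

lemma t_inv (a : ℤ × ℤ) : (t a : G)⁻¹ = t (-a) := by
  apply inv_eq_of_mul_eq_one_right
  rw [← t_add]; simp [t_zero]

lemma s1_inv : (s1 : G)⁻¹ = s1 := inv_eq_of_mul_eq_one_right s1_sq
lemma s2_inv : (s2 : G)⁻¹ = s2 := inv_eq_of_mul_eq_one_right s2_sq

lemma tt (a b : ℤ × ℤ) : (t a : G) * t b = t (a + b) := (t_add a b).symm
lemma tt' (a b : ℤ × ℤ) (x : G) : (t a : G) * (t b * x) = t (a + b) * x := by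
  rw [← mul_assoc, tt]

lemma s1t (m n : ℤ) : (s1 : G) * t (m, n) = t (n - m, n) * s1 := by
  have h := s1_t (G := G) m n
  rw [s1_inv] at h
  calc (s1 : G) * t (m, n) = s1 * t (m, n) * s1 * s1 := by
        rw [mul_assoc, s1_sq, mul_one]
    _ = t (n - m, n) * s1 := by rw [h]

lemma s1t' (m n : ℤ) (x : G) : (s1 : G) * (t (m, n) * x) = t (n - m, n) * (s1 * x) := by
  rw [← mul_assoc, s1t, mul_assoc]

lemma s2t (m n : ℤ) : (s2 : G) * t (m, n) = t (m, m - n) * s2 := by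
  have h := s2_t (G := G) m n
  rw [s2_inv] at h
  calc (s2 : G) * t (m, n) = s2 * t (m, n) * s2 * s2 := by
        rw [mul_assoc, s2_sq, mul_one]
    _ = t (m, m - n) * s2 := by rw [h]

lemma s2t' (m n : ℤ) (x : G) : (s2 : G) * (t (m, n) * x) = t (m, m - n) * (s2 * x) := by
  rw [← mul_assoc, s2t, mul_assoc]

lemma taut (m n : ℤ) : (tau : G) * t (m, n) = t (-n, m - n) * tau := by
  have h := tau_t (G := G) m n
  calc (tau : G) * t (m, n) = tau * t (m, n) * tau⁻¹ * tau := by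
        rw [inv_mul_cancel_right]
    _ = t (-n, m - n) * tau := by rw [h]

lemma taut' (m n : ℤ) (x : G) :
    (tau : G) * (t (m, n) * x) = t (-n, m - n) * (tau * x) := by
  rw [← mul_assoc, taut, mul_assoc]

lemma taus1 : (tau : G) * s1 = s2 * tau := by
  have h := tau_s1 (G := G)
  calc (tau : G) * s1 = tau * s1 * tau⁻¹ * tau := by rw [inv_mul_cancel_right]
    _ = s2 * tau := by rw [h]

lemma taus1' (x : G) : (tau : G) * (s1 * x) = s2 * (tau * x) := by
  rw [← mul_assoc, taus1, mul_assoc]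

lemma taus2 : (tau : G) * s2 = t (1, 1) * (s1 * (s2 * (s1 * tau))) := by
  have h := tau_s2 (G := G)
  calc (tau : G) * s2 = tau * s2 * tau⁻¹ * tau := by rw [inv_mul_cancel_right]
    _ = s0 * tau := by rw [h]
    _ = t (1, 1) * (s1 * (s2 * (s1 * tau))) := by
        rw [s0_def]; simp only [mul_assoc]

lemma taus2' (x : G) :
    (tau : G) * (s2 * x) = t (1, 1) * (s1 * (s2 * (s1 * (tau * x)))) := by
  rw [← mul_assoc, taus2]; simp only [mul_assoc]

lemma s1s1 : (s1 : G) * s1 = 1 := s1_sq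
lemma s1s1' (x : G) : (s1 : G) * (s1 * x) = x := by rw [← mul_assoc, s1_sq, one_mul]
lemma s2s2 : (s2 : G) * s2 = 1 := s2_sq
lemma s2s2' (x : G) : (s2 : G) * (s2 * x) = x := by rw [← mul_assoc, s2_sq, one_mul]

lemma braid : (s2 : G) * (s1 * s2) = s1 * (s2 * s1) := by
  have h : (s1 * s2 : G) * ((s1 * s2) * (s1 * s2)) = 1 := by
    have h3 := braid12 (G := G)
    rw [pow_succ, pow_succ, pow_one, mul_assoc] at h3
    exact h3
  have hinv : ((s1 * s2 : G))⁻¹ = (s1 * s2) * (s1 * s2) :=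
    inv_eq_of_mul_eq_one_right h
  have h21 : (s2 : G) * s1 = (s1 * s2) * (s1 * s2) := by
    rw [← hinv, mul_inv_rev, s1_inv, s2_inv]
  calc (s2 : G) * (s1 * s2) = (s2 * s1) * s2 := by rw [mul_assoc]
    _ = ((s1 * s2) * (s1 * s2)) * s2 := by rw [h21]
    _ = s1 * (s2 * (s1 * (s2 * s2))) := by simp only [mul_assoc]
    _ = s1 * (s2 * s1) := by rw [s2s2, mul_one]

lemma braid' (x : G) : (s2 : G) * (s1 * (s2 * x)) = s1 * (s2 * (s1 * x)) := by
  have := congrArg (· * x) (braid (G := G))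
  simpa only [mul_assoc] using this

end A2.A2Data

namespace A2.A2Data

variable {G : Type*} [Group G] [A2Data G]

/-- auxiliary commuting-across predicate -/
def CommC (i : ℤ) (g : G) : Prop :=
  ∀ x ∈ Ciset G i, ∃ y ∈ Ciset G i, g * x = y * g

lemma commC_one (i : ℤ) : CommC i (1 : G) := by
  intro x hx; exact ⟨x, hx, by rw [one_mul, mul_one]⟩

lemma commC_mul {i : ℤ} {g h : G} (hg : CommC i g) (hh : CommC i h) :
    CommC i (g * h) := by
  intro x hx
  obtain ⟨y, hy, hyx⟩ := hh x hx
  obtain ⟨z, hz, hzy⟩ := hg y hy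
  exact ⟨z, hz, by rw [mul_assoc, hyx, ← mul_assoc, hzy, mul_assoc]⟩

lemma commC_pow {i : ℤ} {g : G} (hg : CommC i g) (n : ℕ) : CommC i (g ^ n) := by
  induction n with
  | zero => simpa using commC_one i
  | succ k ih => rw [pow_succ]; exact commC_mul ih hg

lemma commC_t (i : ℤ) (a b : ℤ) : CommC i (t (a, b) : G) := by
  rintro x ⟨k, rfl | rfl | rfl⟩
  · refine ⟨t (k + 2*a - b, i) * s1, ⟨k + 2*a - b, Or.inl rfl⟩, ?_⟩
    simp only [mul_assoc, tt, tt', s1t, s1t', s2t, s2t', taut, taut', taus1, taus1', taus2, taus2', s1s1, s1s1', s2s2, s2s2', braid, braid', mul_one, Prod.mk_add_mk]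
    all_goals ring_nf
  · refine ⟨t (-i, k + 2*b - a) * s2, ⟨k + 2*b - a, Or.inr (Or.inl rfl)⟩, ?_⟩
    simp only [mul_assoc, tt, tt', s1t, s1t', s2t, s2t', taut, taut', taus1, taus1', taus2, taus2', s1s1, s1s1', s2s2, s2s2', braid, braid', mul_one, Prod.mk_add_mk]
    all_goals ring_nf
  · refine ⟨t (k + a + b, k + a + b - i) * (s1 * s2 * s1),
      ⟨k + a + b, Or.inr (Or.inr rfl)⟩, ?_⟩
    simp only [mul_assoc, tt, tt', s1t, s1t', s2t, s2t', taut, taut', taus1, taus1', taus2, taus2', s1s1, s1s1', s2s2, s2s2', braid, braid', mul_one, Prod.mk_add_mk]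
    all_goals ring_nf

lemma commC_s1 (i : ℤ) : CommC i (s1 : G) := by
  rintro x ⟨k, rfl | rfl | rfl⟩
  · refine ⟨t (i - k, i) * s1, ⟨i - k, Or.inl rfl⟩, ?_⟩
    simp only [mul_assoc, tt, tt', s1t, s1t', s2t, s2t', taut, taut', taus1, taus1', taus2, taus2', s1s1, s1s1', s2s2, s2s2', braid, braid', mul_one, Prod.mk_add_mk]
  · refine ⟨t (k + i, k) * (s1 * s2 * s1), ⟨k + i, Or.inr (Or.inr ?_)⟩, ?_⟩
    · ring_nf
    · simp only [mul_assoc, tt, tt', s1t, s1t', s2t, s2t', taut, taut', taus1, taus1', taus2, taus2', s1s1, s1s1', s2s2, s2s2', braid, braid', mul_one, Prod.mk_add_mk]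
      all_goals ring_nf
  · refine ⟨t (-i, k - i) * s2, ⟨k - i, Or.inr (Or.inl rfl)⟩, ?_⟩
    simp only [mul_assoc, tt, tt', s1t, s1t', s2t, s2t', taut, taut', taus1, taus1', taus2, taus2', s1s1, s1s1', s2s2, s2s2', braid, braid', mul_one, Prod.mk_add_mk]
    all_goals ring_nf

lemma commC_s2 (i : ℤ) : CommC i (s2 : G) := by
  rintro x ⟨k, rfl | rfl | rfl⟩
  · refine ⟨t (k, k - i) * (s1 * s2 * s1), ⟨k, Or.inr (Or.inr rfl)⟩, ?_⟩
    simp only [mul_assoc, tt, tt', s1t, s1t', s2t, s2t', taut, taut', taus1, taus1', taus2, taus2', s1s1, s1s1', s2s2, s2s2', braid, braid', mul_one, Prod.mk_add_mk]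
  · refine ⟨t (-i, -i - k) * s2, ⟨-i - k, Or.inr (Or.inl rfl)⟩, ?_⟩
    simp only [mul_assoc, tt, tt', s1t, s1t', s2t, s2t', taut, taut', taus1, taus1', taus2, taus2', s1s1, s1s1', s2s2, s2s2', braid, braid', mul_one, Prod.mk_add_mk]
    all_goals ring_nf
  · refine ⟨t (k, i) * s1, ⟨k, Or.inl rfl⟩, ?_⟩
    simp only [mul_assoc, tt, tt', s1t, s1t', s2t, s2t', taut, taut', taus1, taus1', taus2, taus2', s1s1, s1s1', s2s2, s2s2', braid, braid', mul_one, Prod.mk_add_mk]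
    all_goals ring_nf

lemma commC_tau (i : ℤ) : CommC i (tau : G) := by
  rintro x ⟨k, rfl | rfl | rfl⟩
  · refine ⟨t (-i, k - i) * s2, ⟨k - i, Or.inr (Or.inl rfl)⟩, ?_⟩
    simp only [mul_assoc, tt, tt', s1t, s1t', s2t, s2t', taut, taut', taus1, taus1', taus2, taus2', s1s1, s1s1', s2s2, s2s2', braid, braid', mul_one, Prod.mk_add_mk]
    all_goals ring_nf
  · refine ⟨t (1 - k, 1 - i - k) * (s1 * s2 * s1),
      ⟨1 - k, Or.inr (Or.inr ?_)⟩, ?_⟩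
    · ring_nf
    · simp only [mul_assoc, tt, tt', s1t, s1t', s2t, s2t', taut, taut', taus1, taus1', taus2, taus2', s1s1, s1s1', s2s2, s2s2', braid, braid', mul_one, Prod.mk_add_mk]
      all_goals ring_nf
  · refine ⟨t (i - k + 1, i) * s1, ⟨i - k + 1, Or.inl rfl⟩, ?_⟩
    simp only [mul_assoc, tt, tt', s1t, s1t', s2t, s2t', taut, taut', taus1, taus1', taus2, taus2', s1s1, s1s1', s2s2, s2s2', braid, braid', mul_one, Prod.mk_add_mk]
    all_goals ring_nf

lemma commC_all (i : ℤ) (g : G) : CommC i g := by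
  obtain ⟨m, n, w, j, hw, rfl⟩ := decomp (G := G) g
  refine commC_mul (commC_mul (commC_t i m n) ?_) (commC_pow (commC_tau i) _)
  simp only [Set.mem_insert_iff, Set.mem_singleton_iff] at hw
  rcases hw with rfl | rfl | rfl | rfl | rfl | rfl
  · exact commC_one i
  · exact commC_s1 i
  · exact commC_s2 i
  · exact commC_mul (commC_s1 i) (commC_s2 i)
  · exact commC_mul (commC_s2 i) (commC_s1 i)
  · exact commC_mul (commC_mul (commC_s1 i) (commC_s2 i)) (commC_s1 i)

lemma conj_mem {i : ℤ} {x : G} (hx : x ∈ Ciset G i) (g : G) :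
    g * x * g⁻¹ ∈ Ciset G i := by
  obtain ⟨y, hy, hxy⟩ := commC_all i g x hx
  rwa [hxy, mul_inv_cancel_right]

end A2.A2Data

namespace A2.A2Data

variable {G : Type*} [Group G] [A2Data G]

lemma mem_Wa_s1 : (s1 : G) ∈ Wa G :=
  Subgroup.subset_closure (by simp [Set.mem_insert_iff])
lemma mem_Wa_s2 : (s2 : G) ∈ Wa G :=
  Subgroup.subset_closure (by simp [Set.mem_insert_iff])
lemma mem_Wa_s0 : (s0 : G) ∈ Wa G :=
  Subgroup.subset_closure (by simp [Set.mem_insert_iff])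

lemma mem_Wa_t11 : (t (1, 1) : G) ∈ Wa G := by
  have h : (t (1, 1) : G) = s0 * (s1 * s2 * s1)⁻¹ := by
    rw [s0_def, mul_inv_cancel_right]
  rw [h]
  exact mul_mem mem_Wa_s0 (inv_mem (mul_mem (mul_mem mem_Wa_s1 mem_Wa_s2) mem_Wa_s1))

lemma mem_Wa_t01 : (t (0, 1) : G) ∈ Wa G := by
  have h := s1_t (G := G) 1 1
  norm_num at h
  rw [← h]
  exact mul_mem (mul_mem mem_Wa_s1 mem_Wa_t11) (inv_mem mem_Wa_s1)

lemma mem_Wa_t10 : (t (1, 0) : G) ∈ Wa G := by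
  have h := s2_t (G := G) 1 1
  norm_num at h
  rw [← h]
  exact mul_mem (mul_mem mem_Wa_s2 mem_Wa_t11) (inv_mem mem_Wa_s2)

lemma t_zpow (v : ℤ × ℤ) : ∀ n : ℤ, (t v : G) ^ n = t (n • v) := by
  intro n
  induction n using Int.induction_on with
  | zero => simp [t_zero]
  | succ k ih =>
      rw [zpow_add_one, ih, tt]
      congr 1
      module
  | pred k ih =>
      rw [zpow_sub_one, ih, t_inv, tt]
      congr 1
      module

lemma mem_Wa_t (m n : ℤ) : (t (m, n) : G) ∈ Wa G := by
  have h : (t (m, n) : G) = t (1, 0) ^ m * t (0, 1) ^ n := by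
    rw [t_zpow, t_zpow, tt]
    congr 1
    simp [Prod.ext_iff]
  rw [h]
  exact mul_mem (zpow_mem mem_Wa_t10 m) (zpow_mem mem_Wa_t01 n)

lemma Ciset_subset_Wa (i : ℤ) : Ciset G i ⊆ (Wa G : Set G) := by
  rintro x ⟨k, rfl | rfl | rfl⟩
  · exact mul_mem (mem_Wa_t _ _) mem_Wa_s1
  · exact mul_mem (mem_Wa_t _ _) mem_Wa_s2
  · exact mul_mem (mem_Wa_t _ _) (mul_mem (mul_mem mem_Wa_s1 mem_Wa_s2) mem_Wa_s1)

lemma Ciset_isConjClass (i : ℤ) : IsConjClass (Ciset G i) := by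
  refine ⟨t (0, i) * s1, Set.Subset.antisymm ?_ ?_⟩
  · rintro x ⟨k, rfl | rfl | rfl⟩
    · refine ⟨t (0, -k), ?_⟩
      simp only [mul_assoc, tt, tt', s1t, s1t', s2t, s2t', s1s1, s1s1', s2s2, s2s2',
        braid, braid', mul_one, t_inv, s1_inv, s2_inv, mul_inv_rev, Prod.neg_mk,
        Prod.mk_add_mk]
      all_goals ring_nf
    · refine ⟨s1 * (s2 * t (0, -(k + i))), ?_⟩
      simp only [mul_assoc, tt, tt', s1t, s1t', s2t, s2t', s1s1, s1s1', s2s2, s2s2',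
        braid, braid', mul_one, t_inv, s1_inv, s2_inv, mul_inv_rev, Prod.neg_mk,
        Prod.mk_add_mk]
      all_goals ring_nf
    · refine ⟨s2 * t (0, -k), ?_⟩
      simp only [mul_assoc, tt, tt', s1t, s1t', s2t, s2t', s1s1, s1s1', s2s2, s2s2',
        braid, braid', mul_one, t_inv, s1_inv, s2_inv, mul_inv_rev, Prod.neg_mk,
        Prod.mk_add_mk]
      all_goals ring_nf
  · rintro x ⟨g, rfl⟩
    exact conj_mem ⟨0, Or.inl rfl⟩ g

end A2.A2Data

open A2 A2Data in
/-- For `i ≥ 1`, the set `C_i` is a single `W̃`-conjugacy class contained in `W_a`,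
with minimal length `3i` if `i` is odd and `3i + 1` if `i` is even. -/
theorem statement_4 {G : Type*} [Group G] [A2Data G] (i : ℕ) (hi : 1 ≤ i) :
    Ciset G (i : ℤ) ⊆ (Wa G : Set G) ∧
    IsConjClass (Ciset G (i : ℤ)) ∧
    IsMinLen (Ciset G (i : ℤ)) (if Odd i then 3 * i else 3 * i + 1) := by
  refine ⟨Ciset_subset_Wa _, Ciset_isConjClass _, ?_, ?_⟩
  · -- a minimizing element exists
    rcases Nat.even_or_odd i with ⟨j, hj⟩ | ⟨j, hj⟩
    · subst hj
      refine ⟨t ((j : ℤ), ((j + j : ℕ) : ℤ)) * s1, ⟨(j : ℤ), Or.inl rfl⟩, ?_⟩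
      rw [len_t_s1, if_neg (by simp [Nat.not_odd_iff_even.mpr ⟨j, rfl⟩])]
      omega
    · subst hj
      refine ⟨t ((j : ℤ) + 1, ((2 * j + 1 : ℕ) : ℤ)) * s1, ⟨(j : ℤ) + 1, Or.inl rfl⟩, ?_⟩
      rw [len_t_s1, if_pos ⟨j, rfl⟩]
      omega
  · -- the lower bound
    rintro x ⟨k, rfl | rfl | rfl⟩ <;> rcases Nat.even_or_odd i with ⟨j, hj⟩ | ⟨j, hj⟩ <;>
      subst hj
    · rw [len_t_s1, if_neg (by simp [Nat.not_odd_iff_even.mpr ⟨j, rfl⟩])]; omega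
    · rw [len_t_s1, if_pos ⟨j, rfl⟩]; omega
    · rw [len_t_s2, if_neg (by simp [Nat.not_odd_iff_even.mpr ⟨j, rfl⟩])]; omega
    · rw [len_t_s2, if_pos ⟨j, rfl⟩]; omega
    · rw [len_t_s1s2s1, if_neg (by simp [Nat.not_odd_iff_even.mpr ⟨j, rfl⟩])]; omega
    · rw [len_t_s1s2s1, if_pos ⟨j, rfl⟩]; omega
end

section
/- In the affine Hecke algebra H̃ of type Ã₂, for any λ in the dominant part of the coroot lattice P₊ ∩ Q and any w̃ in the W̃-conjugacy class 𝕆_λ of the translation t^λ, the class polynomials of w̃ are f_{w̃, 𝕆_λ} = 1 and f_{w̃, 𝕆} = 0 for every other conjugacy class 𝕆. -/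
namespace A2.A2Data

variable {G : Type*} [Group G] [A2Data G]

/-- The `W`-orbit of `(m, n)` in the coroot lattice. -/
def Orb (m n p q : ℤ) : Prop :=
  (p = m ∧ q = n) ∨ (p = n - m ∧ q = n) ∨ (p = m ∧ q = m - n) ∨
  (p = -n ∧ q = m - n) ∨ (p = n - m ∧ q = -m) ∨ (p = -n ∧ q = -m)

lemma Orb.base (m n : ℤ) : Orb m n m n := Or.inl ⟨rfl, rfl⟩

lemma Orb.r1 {m n p q : ℤ} (h : Orb m n p q) : Orb m n (q - p) q := by
  unfold Orb at h ⊢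
  rcases h with ⟨rfl, rfl⟩ | ⟨rfl, rfl⟩ | ⟨rfl, rfl⟩ | ⟨rfl, rfl⟩ | ⟨rfl, rfl⟩ | ⟨rfl, rfl⟩ <;> omega

lemma Orb.r2 {m n p q : ℤ} (h : Orb m n p q) : Orb m n p (p - q) := by
  unfold Orb at h ⊢
  rcases h with ⟨rfl, rfl⟩ | ⟨rfl, rfl⟩ | ⟨rfl, rfl⟩ | ⟨rfl, rfl⟩ | ⟨rfl, rfl⟩ | ⟨rfl, rfl⟩ <;> omega

lemma Orb.rho {m n p q : ℤ} (h : Orb m n p q) : Orb m n (-q) (p - q) := by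
  unfold Orb at h ⊢
  rcases h with ⟨rfl, rfl⟩ | ⟨rfl, rfl⟩ | ⟨rfl, rfl⟩ | ⟨rfl, rfl⟩ | ⟨rfl, rfl⟩ | ⟨rfl, rfl⟩ <;> omega

lemma Orb.len_eq {m n p q : ℤ} (h : Orb m n p q) :
    len (t (p, q) : G) = len (t (m, n) : G) := by
  rw [len_t, len_t]
  unfold Orb at h
  rcases h with ⟨rfl, rfl⟩ | ⟨rfl, rfl⟩ | ⟨rfl, rfl⟩ | ⟨rfl, rfl⟩ | ⟨rfl, rfl⟩ | ⟨rfl, rfl⟩ <;> omega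

lemma t_comm (a b : ℤ × ℤ) : (t a : G) * t b = t b * t a := by
  rw [← t_add, ← t_add, add_comm]

lemma conj_mul (a b x : G) : (a * b) * x * (a * b)⁻¹ = a * (b * x * b⁻¹) * a⁻¹ := by
  group

lemma conj_t_mem (m n : ℤ) (g : G) {p q : ℤ} (h : Orb m n p q) :
    ∃ p' q', Orb m n p' q' ∧ g * t (p, q) * g⁻¹ = t (p', q') := by
  obtain ⟨a, b, w, j, hw, hg⟩ := decomp g
  have htau : ∀ k : ℕ, ∃ p1 q1, Orb m n p1 q1 ∧
      (tau : G) ^ k * t (p, q) * ((tau : G) ^ k)⁻¹ = t (p1, q1) := by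
    intro k
    induction k with
    | zero => exact ⟨p, q, h, by simp⟩
    | succ k ih =>
      obtain ⟨p1, q1, h1, e1⟩ := ih
      refine ⟨-q1, p1 - q1, h1.rho, ?_⟩
      rw [pow_succ', conj_mul, e1, tau_t]
  obtain ⟨p1, q1, h1, e1⟩ := htau (j : ℕ)
  have hwc : ∃ p2 q2, Orb m n p2 q2 ∧ w * t (p1, q1) * w⁻¹ = t (p2, q2) := by
    simp only [Set.mem_insert_iff, Set.mem_singleton_iff] at hw
    rcases hw with rfl | rfl | rfl | rfl | rfl | rfl
    · exact ⟨p1, q1, h1, by simp⟩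
    · exact ⟨q1 - p1, q1, h1.r1, s1_t p1 q1⟩
    · exact ⟨p1, p1 - q1, h1.r2, s2_t p1 q1⟩
    · refine ⟨p1 - q1 - p1, p1 - q1, h1.r2.r1, ?_⟩
      rw [conj_mul, s2_t, s1_t]
    · refine ⟨q1 - p1, q1 - p1 - q1, h1.r1.r2, ?_⟩
      rw [conj_mul, s1_t, s2_t]
    · refine ⟨q1 - p1 - q1 - (q1 - p1), q1 - p1 - q1, h1.r1.r2.r1, ?_⟩
      rw [conj_mul, s1_t, conj_mul, s2_t, s1_t]
  obtain ⟨p2, q2, h2, e2⟩ := hwc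
  refine ⟨p2, q2, h2, ?_⟩
  subst hg
  rw [conj_mul, e1, conj_mul, e2, t_comm, mul_assoc, mul_inv_cancel, mul_one]

lemma mem_conjClass_t {m n : ℤ} {x : G} (hx : x ∈ conjClass (t (m, n) : G)) :
    ∃ p q, Orb m n p q ∧ x = t (p, q) := by
  obtain ⟨g, hg⟩ := hx
  obtain ⟨p, q, h, e⟩ := conj_t_mem m n g (Orb.base m n)
  exact ⟨p, q, h, by rw [← hg, e]⟩

lemma conjClass_eq_of_mem {x y : G} (hy : y ∈ conjClass x) :
    conjClass x = conjClass y := by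
  obtain ⟨h, hh⟩ := hy
  ext z
  constructor
  · rintro ⟨g, hg⟩
    exact ⟨g * h⁻¹, by rw [← hg, ← hh]; group⟩
  · rintro ⟨g, hg⟩
    exact ⟨g * h, by rw [← hg, ← hh]; group⟩

end A2.A2Data

open A2 A2Data in
/-- For dominant `λ = m α₁ + n α₂` in the coroot lattice and any `w̃` in the
conjugacy class `𝕆_λ` of `t^λ`, one has `f_{w̃,𝕆_λ} = 1` and `f_{w̃,𝕆} = 0` for
every other conjugacy class `𝕆`. -/
theorem statement_10 {G : Type*} [Group G] [A2Data G]
    (f : G → Set G → Polynomial ℤ) (hf : ClassPolySystem f)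
    (m n : ℤ) (h1 : 0 ≤ 2*m - n) (h2 : 0 ≤ 2*n - m) :
    ∀ x ∈ conjClass (t (m, n) : G),
      f x (conjClass (t (m, n) : G)) = 1 ∧
      ∀ O : Set G, IsConjClass O → O ≠ conjClass (t (m, n) : G) → f x O = 0 := by
  intro x hx
  -- every element of the class is a translation from the orbit, of the same length
  have hlen : ∀ y ∈ conjClass (t (m, n) : G), len y = len (t (m, n) : G) := by
    intro y hy
    obtain ⟨p, q, hpq, rfl⟩ := mem_conjClass_t hy
    exact hpq.len_eq
  have hmin : ∀ y : G, ConjTo x y → len x ≤ len y := by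
    intro y hy
    have hxclass : conjClass (t (m, n) : G) = conjClass x := conjClass_eq_of_mem hx
    have hyc : y ∈ conjClass (t (m, n) : G) := by rw [hxclass]; exact hy
    rw [hlen x hx, hlen y hyc]
  constructor
  · exact (hf.1 x hmin _ ⟨t (m, n), rfl⟩).1 hx
  · intro O hO hne
    refine (hf.1 x hmin O hO).2 ?_
    intro hxO
    obtain ⟨z, rfl⟩ := hO
    exact hne ((conjClass_eq_of_mem hxO).trans (conjClass_eq_of_mem hx).symm)
end
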